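/- arXiv:2008.07954 — 2 statements merged into one kernel-verified Lean document; each statement's English description precedes it below -/
import Mathlib

section
/- The function g(ρ) = 2ρφ(ρ)/(2Φ(ρ)−1) is strictly decreasing on (0, ∞). -/
open MeasureTheory ProbabilityTheory Real Set

/-- Standard normal PDF φ. -/
noncomputable def stdPDF (x : ℝ) : ℝ := Real.exp (-x ^ 2 / 2) / Real.sqrt (2 * Real.pi)

/-- Standard normal CDF Φ. -/
noncomputable def stdCDF (x : ℝ) : ℝ := ((gaussianReal 0 1) (Set.Iic x)).toReal

/-- The doubly truncated normal distribution: N(μ, η²) conditioned on [μ-ρη, μ+ρη]. -/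
noncomputable def DTN (μ η ρ : ℝ) : Measure ℝ :=
  ProbabilityTheory.cond (gaussianReal μ ⟨η ^ 2, sq_nonneg η⟩) (Set.Icc (μ - ρ * η) (μ + ρ * η))

/-- The DTN density. -/
noncomputable def dtnPDF (μ η ρ : ℝ) (x : ℝ) : ℝ :=
  if x ∈ Set.Icc (μ - ρ * η) (μ + ρ * η) then
    (1 / η) * stdPDF ((x - μ) / η) / (2 * stdCDF ρ - 1) else 0

lemma stdPDF_eq_gauss : stdPDF = gaussianPDFReal 0 1 := by
  funext x
  simp [stdPDF, gaussianPDFReal, div_eq_mul_inv, mul_comm]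

lemma stdPDF_pos (x : ℝ) : 0 < stdPDF x := by
  rw [stdPDF_eq_gauss]; exact gaussianPDFReal_pos 0 1 x one_ne_zero

lemma stdPDF_continuous : Continuous stdPDF := by
  unfold stdPDF
  fun_prop

lemma stdPDF_integrable : Integrable stdPDF := by
  rw [stdPDF_eq_gauss]; exact integrable_gaussianPDFReal 0 1

lemma stdPDF_even (x : ℝ) : stdPDF (-x) = stdPDF x := by
  simp [stdPDF]

lemma stdCDF_eq_integral (x : ℝ) : stdCDF x = ∫ t in Iic x, stdPDF t := by
  rw [stdCDF, gaussianReal_apply_eq_integral 0 one_ne_zero, ENNReal.toReal_ofReal, stdPDF_eq_gauss]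
  exact setIntegral_nonneg measurableSet_Iic fun t _ => gaussianPDFReal_nonneg 0 1 t

lemma stdCDF_sub (a b : ℝ) : stdCDF b - stdCDF a = ∫ t in a..b, stdPDF t := by
  rw [stdCDF_eq_integral, stdCDF_eq_integral]
  exact intervalIntegral.integral_Iic_sub_Iic (stdPDF_integrable.integrableOn)
    (stdPDF_integrable.integrableOn)

lemma stdCDF_hasDerivAt (x : ℝ) : HasDerivAt stdCDF (stdPDF x) x := by
  have h := (stdPDF_continuous.integral_hasStrictDerivAt 0 x).hasDerivAt
  have : stdCDF = fun u => stdCDF 0 + ∫ t in (0:ℝ)..u, stdPDF t := by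
    funext u
    rw [← stdCDF_sub 0 u]; ring
  rw [this]
  exact (h.const_add (stdCDF 0))

lemma stdCDF_zero : stdCDF 0 = 1 / 2 := by
  have h1 : ∫ t in Iic (0:ℝ), stdPDF t = ∫ t in Ioi (0:ℝ), stdPDF t := by
    have h := integral_comp_neg_Iic (0:ℝ) stdPDF
    simp only [stdPDF_even, neg_zero] at h
    exact h
  have htot : (∫ t in Iic (0:ℝ), stdPDF t) + ∫ t in Ioi (0:ℝ), stdPDF t = 1 := by
    rw [← setIntegral_union (by simp [Set.disjoint_left]) measurableSet_Ioi
      stdPDF_integrable.integrableOn stdPDF_integrable.integrableOn, Iic_union_Ioi]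
    rw [MeasureTheory.Measure.restrict_univ, stdPDF_eq_gauss]
    exact integral_gaussianPDFReal_eq_one 0 one_ne_zero
  rw [h1] at htot
  rw [stdCDF_eq_integral, h1]
  linarith

lemma stdPDF_hasDerivAt (x : ℝ) : HasDerivAt stdPDF (-x * stdPDF x) x := by
  have h1 : HasDerivAt (fun y : ℝ => -y ^ 2 / 2) (-x) x := by
    have := ((hasDerivAt_pow 2 x).neg).div_const 2
    refine this.congr_deriv ?_
    ring
  have h2 := (h1.exp).div_const (Real.sqrt (2 * Real.pi))
  refine h2.congr_deriv ?_
  simp only [stdPDF]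
  ring

lemma stdCDF_strictMono : StrictMono stdCDF :=
  strictMono_of_deriv_pos fun x => by
    rw [(stdCDF_hasDerivAt x).deriv]; exact stdPDF_pos x

lemma denom_pos {ρ : ℝ} (hρ : 0 < ρ) : 0 < 2 * stdCDF ρ - 1 := by
  have := stdCDF_strictMono hρ
  rw [stdCDF_zero] at this
  linarith

noncomputable def auxh (ρ : ℝ) : ℝ := (1 - ρ ^ 2) * (2 * stdCDF ρ - 1) - 2 * ρ * stdPDF ρ

lemma auxh_hasDerivAt (x : ℝ) : HasDerivAt auxh (-2 * x * (2 * stdCDF x - 1)) x := by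
  have h1 : HasDerivAt (fun ρ : ℝ => 1 - ρ ^ 2) (-(2 * x)) x := by
    simpa using ((hasDerivAt_pow 2 x).const_sub 1)
  have h2 : HasDerivAt (fun ρ : ℝ => 2 * stdCDF ρ - 1) (2 * stdPDF x) x :=
    ((stdCDF_hasDerivAt x).const_mul 2).sub_const 1
  have h3 : HasDerivAt (fun ρ : ℝ => 2 * ρ * stdPDF ρ)
      (2 * stdPDF x + 2 * x * (-x * stdPDF x)) x := by
    have := ((hasDerivAt_id x).const_mul 2).mul (stdPDF_hasDerivAt x)
    refine this.congr_deriv ?_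
    simp only [id_eq]
    ring
  have := (h1.mul h2).sub h3
  refine this.congr_deriv ?_
  ring

lemma auxh_neg {ρ : ℝ} (hρ : 0 < ρ) : auxh ρ < 0 := by
  have hanti : StrictAntiOn auxh (Ici 0) := by
    apply strictAntiOn_of_deriv_neg (convex_Ici 0)
    · exact Continuous.continuousOn
        (continuous_iff_continuousAt.2 fun x => (auxh_hasDerivAt x).continuousAt)
    · intro x hx
      rw [interior_Ici] at hx
      rw [(auxh_hasDerivAt x).deriv]
      have hx' : (0:ℝ) < x := hx
      have ht := denom_pos hx'
      nlinarith [mul_pos hx' ht]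
  have h0 : auxh 0 = 0 := by simp [auxh, stdCDF_zero]
  have := hanti (le_refl (0:ℝ) : (0:ℝ) ∈ Ici 0) (le_of_lt hρ : ρ ∈ Ici 0) hρ
  linarith

theorem stmt8 :
    StrictAntiOn (fun ρ : ℝ => 2 * ρ * stdPDF ρ / (2 * stdCDF ρ - 1))
      (Set.Ioi 0) := by
  have key : ∀ ρ ∈ Set.Ioi (0:ℝ), HasDerivAt (fun ρ : ℝ => 2 * ρ * stdPDF ρ / (2 * stdCDF ρ - 1))
      ((2 * stdPDF ρ * auxh ρ) / (2 * stdCDF ρ - 1) ^ 2) ρ := by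
    intro ρ hρ
    have hd := denom_pos hρ
    have h3 : HasDerivAt (fun ρ : ℝ => 2 * ρ * stdPDF ρ)
        (2 * stdPDF ρ + 2 * ρ * (-ρ * stdPDF ρ)) ρ := by
      have := ((hasDerivAt_id ρ).const_mul 2).mul (stdPDF_hasDerivAt ρ)
      refine this.congr_deriv ?_
      simp only [id_eq]
      ring
    have h2 : HasDerivAt (fun ρ : ℝ => 2 * stdCDF ρ - 1) (2 * stdPDF ρ) ρ :=
      ((stdCDF_hasDerivAt ρ).const_mul 2).sub_const 1
    have := h3.div h2 (ne_of_gt hd)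
    refine this.congr_deriv ?_
    unfold auxh
    field_simp
    ring
  apply strictAntiOn_of_deriv_neg (convex_Ioi 0)
  · intro ρ hρ
    exact ((key ρ hρ).continuousAt).continuousWithinAt
  · intro ρ hρ
    rw [interior_Ioi] at hρ
    rw [(key ρ hρ).deriv]
    apply div_neg_of_neg_of_pos
    · have h1 := stdPDF_pos ρ
      have h2 := auxh_neg hρ
      nlinarith
    · exact pow_pos (denom_pos hρ) 2
end

section
/- If x ∼ DTN(μ, η², ρ) and x' ∼ DTN(μ, η², ρ') with 0 < ρ ≤ ρ', then Var[x] ≤ Var[x']. -/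
open MeasureTheory ProbabilityTheory Real Set

lemma cont_g (μ : ℝ) (v : NNReal) : Continuous (gaussianPDFReal μ v) := by
  unfold gaussianPDFReal; fun_prop

lemma g_sym (μ : ℝ) (v : NNReal) (c : ℝ) :
    gaussianPDFReal μ v (μ + c) = gaussianPDFReal μ v (μ - c) := by
  unfold gaussianPDFReal; ring_nf

lemma deriv_g (μ : ℝ) (v : NNReal) (hv : v ≠ 0) (x : ℝ) :
    HasDerivAt (fun y => -(v:ℝ) * gaussianPDFReal μ v y) ((x - μ) * gaussianPDFReal μ v x) x := by
  have hv0 : (0:ℝ) < (v:ℝ) := by positivity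
  have h1 : HasDerivAt (fun y : ℝ => -(y - μ)^2/(2*(v:ℝ))) (-(x - μ)/(v:ℝ)) x := by
    have h := (((hasDerivAt_id x).sub_const μ).pow 2).neg.div_const (2*(v:ℝ))
    convert h using 1
    · rfl
    · rfl
    · rfl
    field_simp; simp; ring
  have h2 := (h1.exp).const_mul (-(v:ℝ) * (Real.sqrt (2*π*(v:ℝ)))⁻¹)
  have heq : (fun y => -(v:ℝ) * gaussianPDFReal μ v y)
      = fun y => -(v:ℝ) * (Real.sqrt (2*π*(v:ℝ)))⁻¹ * rexp (-(y-μ)^2/(2*(v:ℝ))) := by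
    funext y; unfold gaussianPDFReal; ring
  rw [heq]
  convert h2 using 1
  · rfl
  · rfl
  unfold gaussianPDFReal; field_simp

lemma mean_int (μ : ℝ) (v : NNReal) (hv : v ≠ 0) (c : ℝ) :
    ∫ x in (μ - c)..(μ + c), (x - μ) * gaussianPDFReal μ v x = 0 := by
  rw [intervalIntegral.integral_eq_sub_of_hasDerivAt (fun x _ => deriv_g μ v hv x)
    (((continuous_id.sub continuous_const).mul (cont_g μ v)).intervalIntegrable _ _)]
  rw [g_sym]; ring

lemma v_ne {η : ℝ} (hη : 0 < η) : (⟨η ^ 2, sq_nonneg η⟩ : NNReal) ≠ 0 := by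
  intro h
  have := congrArg (fun x : NNReal => (x : ℝ)) h
  replace this : η ^ 2 = 0 := this
  nlinarith

lemma icc_int (μ η ρ : ℝ) (hρη : 0 ≤ ρ * η) (f : ℝ → ℝ) :
    ∫ x in Icc (μ - ρ*η) (μ + ρ*η), f x = ∫ x in (μ - ρ*η)..(μ + ρ*η), f x := by
  rw [integral_Icc_eq_integral_Ioc, intervalIntegral.integral_of_le (by linarith)]

lemma integral_DTN (μ η ρ : ℝ) (hη : 0 < η) (hρ : 0 < ρ) (f : ℝ → ℝ) :
    ∫ x, f x ∂(DTN μ η ρ) =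
      (∫ x in (μ - ρ*η)..(μ + ρ*η), gaussianPDFReal μ ⟨η^2, sq_nonneg η⟩ x)⁻¹ *
      ∫ x in (μ - ρ*η)..(μ + ρ*η), f x * gaussianPDFReal μ ⟨η^2, sq_nonneg η⟩ x := by
  set v : NNReal := ⟨η^2, sq_nonneg η⟩ with hvdef
  have hv : v ≠ 0 := v_ne hη
  have hρη : 0 ≤ ρ * η := by positivity
  unfold DTN ProbabilityTheory.cond
  rw [integral_smul_measure]
  rw [gaussianReal_apply_eq_integral μ hv]
  rw [gaussianReal_of_var_ne_zero μ hv, restrict_withDensity measurableSet_Icc]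
  have hpdf : gaussianPDF μ v = fun x => ((Real.toNNReal (gaussianPDFReal μ v x) : NNReal) : ENNReal) := rfl
  rw [hpdf, integral_withDensity_eq_integral_smul (measurable_gaussianPDFReal μ v).real_toNNReal f]
  have h1 : ∫ x in Icc (μ - ρ*η) (μ + ρ*η), (Real.toNNReal (gaussianPDFReal μ v x)) • f x
      = ∫ x in (μ - ρ*η)..(μ + ρ*η), f x * gaussianPDFReal μ v x := by
    rw [← icc_int μ η ρ hρη]
    apply setIntegral_congr_fun measurableSet_Icc
    intro x _
    simp [NNReal.smul_def, Real.coe_toNNReal _ (gaussianPDFReal_nonneg μ v x), mul_comm]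
  rw [h1, ENNReal.toReal_inv, ENNReal.toReal_ofReal
    (setIntegral_nonneg measurableSet_Icc fun x _ => gaussianPDFReal_nonneg μ v x)]
  rw [icc_int μ η ρ hρη]
  rfl

lemma D_pos (μ η ρ : ℝ) (hη : 0 < η) (hρ : 0 < ρ) :
    0 < ∫ x in (μ - ρ*η)..(μ + ρ*η), gaussianPDFReal μ ⟨η^2, sq_nonneg η⟩ x := by
  apply intervalIntegral.intervalIntegral_pos_of_pos_on
    ((cont_g μ _).intervalIntegrable _ _)
  · exact fun x _ => gaussianPDFReal_pos μ _ x (v_ne hη)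
  · nlinarith

lemma DTN_prob (μ η ρ : ℝ) (hη : 0 < η) (hρ : 0 < ρ) :
    IsProbabilityMeasure (DTN μ η ρ) := by
  haveI : IsProbabilityMeasure (gaussianReal μ ⟨η^2, sq_nonneg η⟩) := instIsProbabilityMeasureGaussianReal μ _
  apply cond_isProbabilityMeasure
  rw [gaussianReal_apply_eq_integral μ (v_ne hη), icc_int μ η ρ (by positivity)]
  simp only [ne_eq, ENNReal.ofReal_eq_zero, not_le]
  exact D_pos μ η ρ hη hρ

lemma DTN_memLp (μ η ρ : ℝ) (hη : 0 < η) (hρ : 0 < ρ) :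
    MemLp id 2 (DTN μ η ρ) := by
  have := DTN_prob μ η ρ hη hρ
  apply MemLp.of_bound aestronglyMeasurable_id (|μ| + ρ * η)
  unfold DTN ProbabilityTheory.cond
  refine Measure.ae_smul_measure ?_ _
  filter_upwards [ae_restrict_mem measurableSet_Icc] with x hx
  have h1 := hx.1; have h2 := hx.2
  have := neg_abs_le μ; have := le_abs_self μ
  rw [Real.norm_eq_abs, abs_le]
  constructor <;> simp only [id] <;> linarith

lemma mean_DTN (μ η ρ : ℝ) (hη : 0 < η) (hρ : 0 < ρ) :
    ∫ x, x ∂(DTN μ η ρ) = μ := by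
  have hD := D_pos μ η ρ hη hρ
  rw [show (∫ x, x ∂(DTN μ η ρ)) = ∫ x, id x ∂(DTN μ η ρ) from rfl,
    integral_DTN μ η ρ hη hρ id]
  have key : ∫ x in (μ - ρ*η)..(μ + ρ*η), id x * gaussianPDFReal μ ⟨η^2, sq_nonneg η⟩ x
      = μ * ∫ x in (μ - ρ*η)..(μ + ρ*η), gaussianPDFReal μ ⟨η^2, sq_nonneg η⟩ x := by
    have h1 : ∀ x, id x * gaussianPDFReal μ ⟨η^2, sq_nonneg η⟩ x
        = (x - μ) * gaussianPDFReal μ ⟨η^2, sq_nonneg η⟩ x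
          + μ * gaussianPDFReal μ ⟨η^2, sq_nonneg η⟩ x := by intro x; simp; ring
    simp_rw [h1]
    rw [intervalIntegral.integral_add
      ((Continuous.intervalIntegrable (by exact (continuous_id.sub continuous_const).mul (cont_g μ _)) _ _ :
        IntervalIntegrable (fun x => (x - μ) * gaussianPDFReal μ ⟨η^2, sq_nonneg η⟩ x) volume _ _))
      ((Continuous.intervalIntegrable (by exact continuous_const.mul (cont_g μ _)) _ _ :
        IntervalIntegrable (fun x => μ * gaussianPDFReal μ ⟨η^2, sq_nonneg η⟩ x) volume _ _)),
      mean_int μ _ (v_ne hη) (ρ*η), intervalIntegral.integral_const_mul]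
    ring
  rw [key]
  rw [mul_comm μ]; exact inv_mul_cancel_left₀ hD.ne' μ

lemma var_DTN (μ η ρ : ℝ) (hη : 0 < η) (hρ : 0 < ρ) :
    variance id (DTN μ η ρ) =
      (∫ x in (μ - ρ*η)..(μ + ρ*η), gaussianPDFReal μ ⟨η^2, sq_nonneg η⟩ x)⁻¹ *
      ∫ x in (μ - ρ*η)..(μ + ρ*η), (x - μ)^2 * gaussianPDFReal μ ⟨η^2, sq_nonneg η⟩ x := by
  have := DTN_prob μ η ρ hη hρ
  rw [show variance id (DTN μ η ρ) = ∫ x, ((id - fun _ => ∫ x, id x ∂(DTN μ η ρ) :) ^ (2:ℕ) : ℝ → ℝ) x ∂(DTN μ η ρ) from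
    variance_eq_integral measurable_id.aemeasurable]
  have hm : ∫ x, id x ∂(DTN μ η ρ) = μ := mean_DTN μ η ρ hη hρ
  rw [show ((id - fun _ => ∫ x, id x ∂(DTN μ η ρ) :) ^ (2:ℕ) : ℝ → ℝ)
      = fun x => (x - μ)^2 by rw [hm]; funext x; simp]
  exact integral_DTN μ η ρ hη hρ _

lemma key_ineq (μ η ρ ρ' : ℝ) (hη : 0 < η) (hρ : 0 < ρ) (hρρ' : ρ ≤ ρ') :
    (∫ x in (μ - ρ*η)..(μ + ρ*η), gaussianPDFReal μ ⟨η^2, sq_nonneg η⟩ x)⁻¹ *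
      (∫ x in (μ - ρ*η)..(μ + ρ*η), (x - μ)^2 * gaussianPDFReal μ ⟨η^2, sq_nonneg η⟩ x)
    ≤ (∫ x in (μ - ρ'*η)..(μ + ρ'*η), gaussianPDFReal μ ⟨η^2, sq_nonneg η⟩ x)⁻¹ *
      (∫ x in (μ - ρ'*η)..(μ + ρ'*η), (x - μ)^2 * gaussianPDFReal μ ⟨η^2, sq_nonneg η⟩ x) := by
  have hρ' : 0 < ρ' := lt_of_lt_of_le hρ hρρ'
  set g : ℝ → ℝ := gaussianPDFReal μ ⟨η^2, sq_nonneg η⟩ with hg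
  have hgc : Continuous g := cont_g μ _
  have hgn : ∀ x, 0 ≤ g x := fun x => gaussianPDFReal_nonneg μ _ x
  set a' := μ - ρ'*η; set a := μ - ρ*η; set b := μ + ρ*η; set b' := μ + ρ'*η
  have haa : a' ≤ a := by simp only [a', a]; nlinarith
  have hab : a ≤ b := by simp only [a, b]; nlinarith
  have hbb : b ≤ b' := by simp only [b, b']; nlinarith
  have ig : ∀ u w : ℝ, IntervalIntegrable g volume u w := fun u w => hgc.intervalIntegrable u w
  have hNc : Continuous (fun x => (x - μ)^2 * g x) := by fun_prop
  have iN : ∀ u w : ℝ, IntervalIntegrable (fun x => (x - μ)^2 * g x) volume u w :=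
    fun u w => hNc.intervalIntegrable u w
  have hD := D_pos μ η ρ hη hρ
  have hD' := D_pos μ η ρ' hη hρ'
  rw [inv_mul_eq_div, inv_mul_eq_div, div_le_div_iff₀ hD hD']
  set N := ∫ x in a..b, (x - μ)^2 * g x
  set N' := ∫ x in a'..b', (x - μ)^2 * g x
  set D := ∫ x in a..b, g x
  set D' := ∫ x in a'..b', g x
  set L := ∫ x in a'..a, (x - μ)^2 * g x
  set R := ∫ x in b..b', (x - μ)^2 * g x
  set Ld := ∫ x in a'..a, g x
  set Rd := ∫ x in b..b', g x
  have hNsplit : N' = L + N + R := by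
    have h1 := intervalIntegral.integral_add_adjacent_intervals (iN a' b) (iN b b')
    have h2 := intervalIntegral.integral_add_adjacent_intervals (iN a' a) (iN a b)
    simp only [N', L, N, R] at *
    linarith
  have hDsplit : D' = Ld + D + Rd := by
    have h1 := intervalIntegral.integral_add_adjacent_intervals (ig a' b) (ig b b')
    have h2 := intervalIntegral.integral_add_adjacent_intervals (ig a' a) (ig a b)
    simp only [D', Ld, D, Rd] at *
    linarith
  have hLd : 0 ≤ Ld := intervalIntegral.integral_nonneg haa (fun x _ => hgn x)
  have hRd : 0 ≤ Rd := intervalIntegral.integral_nonneg hbb (fun x _ => hgn x)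
  have hN0 : 0 ≤ N := intervalIntegral.integral_nonneg hab (fun x _ => mul_nonneg (sq_nonneg _) (hgn x))
  have hM : N ≤ (ρ*η)^2 * D := by
    have : (ρ*η)^2 * D = ∫ x in a..b, (ρ*η)^2 * g x := by
      rw [intervalIntegral.integral_const_mul]
    rw [this]
    apply intervalIntegral.integral_mono_on hab (iN a b) ((continuous_const.mul hgc).intervalIntegrable a b)
    intro x hx
    have h1 : a ≤ x := hx.1
    have h2 : x ≤ b := hx.2
    have : (x - μ)^2 ≤ (ρ*η)^2 := by simp only [a, b] at h1 h2; nlinarith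
    exact mul_le_mul_of_nonneg_right this (hgn x)
  have hL : (ρ*η)^2 * Ld ≤ L := by
    have : (ρ*η)^2 * Ld = ∫ x in a'..a, (ρ*η)^2 * g x := by
      rw [intervalIntegral.integral_const_mul]
    rw [this]
    apply intervalIntegral.integral_mono_on haa ((continuous_const.mul hgc).intervalIntegrable a' a) (iN a' a)
    intro x hx
    have h2 : x ≤ a := hx.2
    have : (ρ*η)^2 ≤ (x - μ)^2 := by
      simp only [a] at h2
      nlinarith [mul_nonneg (by linarith : (0:ℝ) ≤ -(x-μ) - ρ*η) (by nlinarith : (0:ℝ) ≤ -(x-μ) + ρ*η)]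
    exact mul_le_mul_of_nonneg_right this (hgn x)
  have hR : (ρ*η)^2 * Rd ≤ R := by
    have : (ρ*η)^2 * Rd = ∫ x in b..b', (ρ*η)^2 * g x := by
      rw [intervalIntegral.integral_const_mul]
    rw [this]
    apply intervalIntegral.integral_mono_on hbb ((continuous_const.mul hgc).intervalIntegrable b b') (iN b b')
    intro x hx
    have h1 : b ≤ x := hx.1
    have : (ρ*η)^2 ≤ (x - μ)^2 := by
      simp only [b] at h1
      nlinarith [mul_nonneg (by linarith : (0:ℝ) ≤ (x-μ) - ρ*η) (by nlinarith : (0:ℝ) ≤ (x-μ) + ρ*η)]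
    exact mul_le_mul_of_nonneg_right this (hgn x)
  nlinarith [mul_le_mul_of_nonneg_right hM (add_nonneg hLd hRd),
    mul_le_mul_of_nonneg_left (add_le_add hL hR) (le_of_lt hD)]


theorem stmt10 (μ η ρ ρ' : ℝ) (hη : 0 < η) (hρ : 0 < ρ) (hρρ' : ρ ≤ ρ') :
    variance id (DTN μ η ρ) ≤ variance id (DTN μ η ρ') := by
  rw [var_DTN μ η ρ hη hρ, var_DTN μ η ρ' hη (lt_of_lt_of_le hρ hρρ')]
  exact key_ineq μ η ρ ρ' hη hρ hρρ'
end
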